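/- For any finite directed graph G with IN edges, the number of (ordered) triangles, i.e., triples (a₁,a₂,a₃) with edges (a₁,a₂), (a₂,a₃), (a₃,a₁) all present, is at most IN^{3/2}. -/

import Mathlib

/-- AGM bound for the triangle query: for a finite directed graph with edge set
`E` of size `IN`, the number of ordered triangles `(a₁,a₂,a₃)` with
`(a₁,a₂), (a₂,a₃), (a₃,a₁) ∈ E` is at most `IN^(3/2)`. -/
theorem triangle_agm_bound {V : Type*} (E : Finset (V × V)) :
    (({p : V × V × V | (p.1, p.2.1) ∈ E ∧ (p.2.1, p.2.2) ∈ E ∧ (p.2.2, p.1) ∈ E}.ncard : ℝ))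
      ≤ (E.card : ℝ) ^ ((3 : ℝ) / 2) := by
  classical
  set m : ℕ := E.card with hm
  set F : Finset ((V × V) × (V × V)) :=
    (E ×ˢ E).filter (fun q => q.1.2 = q.2.1 ∧ (q.2.2, q.1.1) ∈ E) with hF
  set N : Finset (V × V × V) := F.image (fun q => (q.1.1, q.1.2, q.2.2)) with hN
  have hset : {p : V × V × V | (p.1, p.2.1) ∈ E ∧ (p.2.1, p.2.2) ∈ E ∧ (p.2.2, p.1) ∈ E}
      = ↑N := by
    ext ⟨a, b, c⟩
    simp only [Set.mem_setOf_eq, Finset.coe_image, Set.mem_image, Finset.mem_coe, hN, hF,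
      Finset.mem_filter, Finset.mem_product]
    constructor
    · rintro ⟨h1, h2, h3⟩
      exact ⟨((a, b), (b, c)), ⟨⟨h1, h2⟩, rfl, h3⟩, rfl⟩
    · rintro ⟨⟨⟨x1, x2⟩, ⟨y1, y2⟩⟩, ⟨⟨hq1, hq2⟩, heq, h3⟩, hpe⟩
      simp only [Prod.mk.injEq] at heq hpe ⊢
      obtain ⟨rfl, rfl, rfl⟩ := hpe
      subst heq
      exact ⟨hq1, hq2, h3⟩
  rw [hset, Set.ncard_coe_finset]
  have hNF : N.card = F.card := by
    apply Finset.card_image_of_injOn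
    rintro ⟨⟨a, b⟩, ⟨b', c⟩⟩ hq ⟨⟨a2, b2⟩, ⟨b2', c2⟩⟩ hq2 h
    simp only [hF, Finset.mem_coe, Finset.mem_filter, Finset.mem_product] at hq hq2
    obtain ⟨-, heq, -⟩ := hq
    obtain ⟨-, heq2, -⟩ := hq2
    subst heq; subst heq2
    simp only [Prod.mk.injEq] at h ⊢
    tauto
  rw [hNF]
  -- vertex set
  set B : Finset V := E.image Prod.fst ∪ E.image Prod.snd with hB
  set din : V → ℕ := fun b => (E.filter (fun e => e.2 = b)).card with hdin
  set dout : V → ℕ := fun b => (E.filter (fun e => e.1 = b)).card with hdout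
  have hFib : F.card = ∑ b ∈ B, (F.filter (fun q => q.1.2 = b)).card := by
    apply Finset.card_eq_sum_card_fiberwise
    intro q hq
    simp only [hF, Finset.mem_coe, Finset.mem_filter, Finset.mem_product] at hq
    simp only [hB, Finset.mem_coe, Finset.mem_union, Finset.mem_image]
    exact Or.inr ⟨q.1, hq.1.1, rfl⟩
  -- fiber bounds
  have claimA : ∀ b, (F.filter (fun q => q.1.2 = b)).card ≤ din b * dout b := by
    intro b
    have hsub : F.filter (fun q => q.1.2 = b) ⊆
        (E.filter (fun e => e.2 = b)) ×ˢ (E.filter (fun e => e.1 = b)) := by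
      intro q hq
      simp only [hF, Finset.mem_filter, Finset.mem_product] at hq ⊢
      obtain ⟨⟨⟨h1, h2⟩, heq, -⟩, hb⟩ := hq
      exact ⟨⟨h1, hb⟩, h2, by rw [← heq, hb]⟩
    calc (F.filter (fun q => q.1.2 = b)).card
        ≤ _ := Finset.card_le_card hsub
      _ = din b * dout b := by rw [Finset.card_product]
  have claimB : ∀ b, (F.filter (fun q => q.1.2 = b)).card ≤ m := by
    intro b
    apply Finset.card_le_card_of_injOn (fun q => (q.2.2, q.1.1))
    · intro q hq
      simp only [hF, Finset.mem_coe, Finset.mem_filter, Finset.mem_product] at hq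
      exact hq.1.2.2
    · rintro ⟨⟨a, b1⟩, ⟨b1', c⟩⟩ hq ⟨⟨a2, b2⟩, ⟨b2', c2⟩⟩ hq2 h
      simp only [hF, Finset.mem_coe, Finset.mem_filter, Finset.mem_product] at hq hq2
      obtain ⟨⟨-, heq, -⟩, hb⟩ := hq
      obtain ⟨⟨-, heq2, -⟩, hb2⟩ := hq2
      simp only [Prod.mk.injEq] at h ⊢
      obtain ⟨rfl, rfl⟩ := h
      subst hb; subst hb2
      exact ⟨⟨rfl, rfl⟩, heq.symm.trans heq2, rfl⟩
  -- degree sums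
  have hdinsum : ∑ b ∈ B, din b = m := by
    rw [hm]
    exact (Finset.card_eq_sum_card_fiberwise (fun e he => by
      simp only [hB, Finset.mem_coe, Finset.mem_union, Finset.mem_image]
      exact Or.inr ⟨e, he, rfl⟩)).symm
  have hdoutsum : ∑ b ∈ B, dout b = m := by
    rw [hm]
    exact (Finset.card_eq_sum_card_fiberwise (fun e he => by
      simp only [hB, Finset.mem_coe, Finset.mem_union, Finset.mem_image]
      exact Or.inl ⟨e, he, rfl⟩)).symm
  -- real bounds
  have hm0 : (0 : ℝ) ≤ (m : ℝ) := Nat.cast_nonneg _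
  have key : ∀ b ∈ B, ((F.filter (fun q => q.1.2 = b)).card : ℝ)
      ≤ (Real.sqrt (din b) * Real.sqrt (dout b)) * Real.sqrt m := by
    intro b _
    set x : ℝ := ((F.filter (fun q => q.1.2 = b)).card : ℝ) with hx
    have hx0 : 0 ≤ x := Nat.cast_nonneg _
    have hxsq : x * x ≤ ((din b : ℝ) * (dout b : ℝ)) * (m : ℝ) := by
      have h1 : x ≤ (din b : ℝ) * (dout b : ℝ) := by
        rw [hx]; exact_mod_cast claimA b
      have h2 : x ≤ (m : ℝ) := by rw [hx]; exact_mod_cast claimB b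
      exact mul_le_mul h1 h2 hx0 (by positivity)
    calc x = Real.sqrt (x * x) := (Real.sqrt_mul_self hx0).symm
      _ ≤ Real.sqrt (((din b : ℝ) * (dout b : ℝ)) * (m : ℝ)) := Real.sqrt_le_sqrt hxsq
      _ = (Real.sqrt (din b) * Real.sqrt (dout b)) * Real.sqrt m := by
          rw [Real.sqrt_mul (by positivity), Real.sqrt_mul (by positivity)]
  have hsumle : (F.card : ℝ) ≤ (∑ b ∈ B, Real.sqrt (din b) * Real.sqrt (dout b)) * Real.sqrt m := by
    rw [hFib, Finset.sum_mul]
    push_cast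
    exact Finset.sum_le_sum key
  -- Cauchy-Schwarz
  have hCS : (∑ b ∈ B, Real.sqrt (din b) * Real.sqrt (dout b)) ≤ (m : ℝ) := by
    set A : ℝ := ∑ b ∈ B, Real.sqrt (din b) * Real.sqrt (dout b) with hA
    have hA0 : 0 ≤ A := Finset.sum_nonneg fun b _ => by positivity
    have hAsq : A ^ 2 ≤ (m : ℝ) * (m : ℝ) := by
      calc A ^ 2 ≤ (∑ b ∈ B, Real.sqrt (din b) ^ 2) * (∑ b ∈ B, Real.sqrt (dout b) ^ 2) :=
            Finset.sum_mul_sq_le_sq_mul_sq B _ _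
        _ = (m : ℝ) * (m : ℝ) := by
            rw [Finset.sum_congr rfl (fun b _ => Real.sq_sqrt (Nat.cast_nonneg _)),
              Finset.sum_congr rfl (fun b _ => Real.sq_sqrt (Nat.cast_nonneg _))]
            rw [← Nat.cast_sum, ← Nat.cast_sum, hdinsum, hdoutsum]
      
    calc A = Real.sqrt (A ^ 2) := by rw [Real.sqrt_sq hA0]
      _ ≤ Real.sqrt ((m : ℝ) * (m : ℝ)) := Real.sqrt_le_sqrt hAsq
      _ = (m : ℝ) := Real.sqrt_mul_self hm0
  have h32 : ((m : ℝ)) ^ ((3 : ℝ) / 2) = (m : ℝ) * Real.sqrt m := by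
    have : ((3 : ℝ) / 2) = ((1 : ℝ) / 2) * (3 : ℕ) := by push_cast; ring
    rw [this, Real.rpow_mul hm0, Real.rpow_natCast, ← Real.sqrt_eq_rpow]
    have hs : Real.sqrt (m : ℝ) ^ 2 = (m : ℝ) := Real.sq_sqrt hm0
    calc Real.sqrt (m : ℝ) ^ 3 = Real.sqrt (m : ℝ) ^ 2 * Real.sqrt m := by ring
      _ = (m : ℝ) * Real.sqrt m := by rw [hs]
  calc (F.card : ℝ) ≤ (∑ b ∈ B, Real.sqrt (din b) * Real.sqrt (dout b)) * Real.sqrt m := hsumle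
    _ ≤ (m : ℝ) * Real.sqrt m := by
        apply mul_le_mul_of_nonneg_right hCS (Real.sqrt_nonneg _)
    _ = (m : ℝ) ^ ((3 : ℝ) / 2) := h32.symm
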